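/- Let Z be an m×n real matrix with singular value decomposition Z = U diag(σ) V'. For λ ≥ 0, the matrix S_{λ,ℓ₀}(Z) := U diag(σ_1·1(σ_1 > √(2λ)), …, σ_{min(m,n)}·1(σ_{min(m,n)} > √(2λ))) V' (hard-thresholding of the singular values at level √(2λ)) is a minimizer over all m×n matrices X of (1/2)‖X − Z‖_F² + λ·rank(X). -/

import Mathlib

open Matrix

open Module

/-- Squared Frobenius norm of a real matrix. -/
noncomputable def frobSq {m n : ℕ} (A : Matrix (Fin m) (Fin n) ℝ) : ℝ :=
  ∑ i, ∑ j, (A i j) ^ 2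

lemma frobSq_nonneg {m n : ℕ} (A : Matrix (Fin m) (Fin n) ℝ) : 0 ≤ frobSq A :=
  Finset.sum_nonneg fun _ _ => Finset.sum_nonneg fun _ _ => sq_nonneg _

lemma frobSq_eq_trace {m n : ℕ} (A : Matrix (Fin m) (Fin n) ℝ) :
    frobSq A = (Aᵀ * A).trace := by
  simp only [frobSq, Matrix.trace, Matrix.diag, Matrix.mul_apply, Matrix.transpose_apply]
  rw [Finset.sum_comm]
  simp [sq]

lemma frobSq_mul_left {m n k : ℕ} (U : Matrix (Fin m) (Fin n) ℝ) (hU : Uᵀ * U = 1)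
    (A : Matrix (Fin n) (Fin k) ℝ) : frobSq (U * A) = frobSq A := by
  rw [frobSq_eq_trace, frobSq_eq_trace, Matrix.transpose_mul,
    show Aᵀ * Uᵀ * (U * A) = Aᵀ * (Uᵀ * U) * A by rw [Matrix.mul_assoc, Matrix.mul_assoc,
      Matrix.mul_assoc], hU, Matrix.mul_one]

lemma frobSq_mul_right {m n : ℕ} (A : Matrix (Fin m) (Fin n) ℝ)
    (V : Matrix (Fin n) (Fin n) ℝ) (hV : Vᵀ * V = 1) : frobSq (A * Vᵀ) = frobSq A := by
  rw [frobSq_eq_trace, frobSq_eq_trace, Matrix.transpose_mul, Matrix.transpose_transpose,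
    show V * Aᵀ * (A * Vᵀ) = V * (Aᵀ * A) * Vᵀ by rw [Matrix.mul_assoc, Matrix.mul_assoc,
      Matrix.mul_assoc], Matrix.trace_mul_cycle, ← Matrix.mul_assoc, hV, Matrix.one_mul]

lemma frobSq_mul_right' {m n : ℕ} (A : Matrix (Fin m) (Fin n) ℝ)
    (V : Matrix (Fin n) (Fin n) ℝ) (hV : Vᵀ * V = 1) : frobSq (A * V) = frobSq A := by
  have hV2 : V * Vᵀ = 1 := mul_eq_one_comm.mp hV
  have := frobSq_mul_right A Vᵀ (by rw [Matrix.transpose_transpose]; exact hV2)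
  rwa [Matrix.transpose_transpose] at this

lemma frobSq_bessel {m n k : ℕ} (U : Matrix (Fin m) (Fin n) ℝ) (hU : Uᵀ * U = 1)
    (M : Matrix (Fin m) (Fin k) ℝ) : frobSq (Uᵀ * M) ≤ frobSq M := by
  set P : Matrix (Fin m) (Fin m) ℝ := U * Uᵀ with hPdef
  have hP : P * P = P := by
    rw [hPdef, Matrix.mul_assoc, ← Matrix.mul_assoc Uᵀ, hU, Matrix.one_mul]
  have hPt : Pᵀ = P := by rw [hPdef, Matrix.transpose_mul, Matrix.transpose_transpose]
  have key : frobSq M - frobSq (Uᵀ * M) = frobSq ((1 - P) * M) := by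
    rw [frobSq_eq_trace, frobSq_eq_trace, frobSq_eq_trace]
    have hQ : (1 - P) * (1 - P) = 1 - P := by
      have h0 : (1 - P) * (1 - P) = 1 - P - P + P * P := by noncomm_ring
      rw [h0, hP]; abel
    have h1 : ((1 - P) * M)ᵀ * ((1 - P) * M) = Mᵀ * M - Mᵀ * (P * M) := by
      rw [Matrix.transpose_mul, Matrix.transpose_sub, Matrix.transpose_one, hPt,
        Matrix.mul_assoc, ← Matrix.mul_assoc (1 - P), hQ, Matrix.sub_mul, Matrix.one_mul,
        Matrix.mul_sub]
    have h2 : (Uᵀ * M)ᵀ * (Uᵀ * M) = Mᵀ * (P * M) := by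
      rw [Matrix.transpose_mul, Matrix.transpose_transpose, hPdef, Matrix.mul_assoc,
        Matrix.mul_assoc]
    rw [h1, h2, Matrix.trace_sub]
  have := frobSq_nonneg ((1 - P) * M)
  linarith

lemma card_filter_le_val {n r : ℕ} (hr : r ≤ n) :
    (Finset.univ.filter fun i : Fin n => r ≤ i.val).card = n - r := by
  rcases Nat.lt_or_ge r n with h | h
  · have : (Finset.univ.filter fun i : Fin n => r ≤ i.val) = Finset.Ici (⟨r, h⟩ : Fin n) := by
      ext i; simp [Fin.le_def]
    rw [this, Fin.card_Ici]
  · have h1 : (Finset.univ.filter fun i : Fin n => r ≤ i.val) = ∅ := by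
      ext i; simp only [Finset.mem_filter, Finset.mem_univ, true_and, Finset.notMem_empty,
        iff_false]
      exact fun hc => absurd (lt_of_lt_of_le i.isLt h) (not_lt.mpr hc)
    rw [h1]; simp; omega

lemma card_filter_lt_le {n r : ℕ} :
    (Finset.univ.filter fun i : Fin n => i.val < r).card ≤ r := by
  classical
  calc (Finset.univ.filter fun i : Fin n => i.val < r).card
      ≤ (Finset.range r).card := by
        apply Finset.card_le_card_of_injOn (fun i => i.val)
        · intro i hi; simp at hi ⊢; exact hi
        · intro a _ b _ h; exact Fin.ext h
    _ = r := Finset.card_range r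

/-- Weighted sum lower bound: if `s` is antitone nonneg and `q` are weights in `[0,1]`
with total mass `n - r`, then the weighted sum dominates the tail sum. -/
lemma weighted_tail_bound {n r : ℕ} (hr : r ≤ n) (s q : Fin n → ℝ)
    (hs0 : ∀ i, 0 ≤ s i) (hmono : ∀ i j : Fin n, i ≤ j → s j ≤ s i)
    (hq0 : ∀ i, 0 ≤ q i) (hq1 : ∀ i, q i ≤ 1)
    (hsum : ∑ i, q i = (n : ℝ) - r) :
    ∑ i ∈ Finset.univ.filter (fun i : Fin n => r ≤ i.val), s i ≤ ∑ i, s i * q i := by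
  rcases Nat.lt_or_ge r n with h | h
  · set τ : ℝ := s ⟨r, h⟩ with hτ
    have key : ∀ i : Fin n, τ * q i - (if r ≤ i.val then τ else 0)
        ≤ s i * q i - (if r ≤ i.val then s i else 0) := by
      intro i
      rcases le_or_gt r i.val with hi | hi
      · have h1 : s i ≤ τ := hmono ⟨r, h⟩ i (by simpa [Fin.le_def] using hi)
        have h2 : q i - 1 ≤ 0 := by linarith [hq1 i]
        simp only [if_pos hi]
        nlinarith
      · have h1 : τ ≤ s i := hmono i ⟨r, h⟩ (by simp [Fin.le_def]; omega)
        simp only [if_neg (by omega : ¬ r ≤ i.val)]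
        nlinarith [hq0 i]
    have hsum2 : (∑ i : Fin n, τ * q i)
        - ∑ _i ∈ Finset.univ.filter (fun i : Fin n => r ≤ i.val), τ = 0 := by
      rw [← Finset.mul_sum, hsum, Finset.sum_const, card_filter_le_val hr, nsmul_eq_mul,
        Nat.cast_sub hr]
      ring
    have hle := Finset.sum_le_sum (fun i (_ : i ∈ Finset.univ) => key i)
    rw [Finset.sum_sub_distrib, Finset.sum_sub_distrib, ← Finset.sum_filter,
      ← Finset.sum_filter] at hle
    linarith
  · have hempty : (Finset.univ.filter fun i : Fin n => r ≤ i.val) = ∅ := by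
      ext i; simp; omega
    rw [hempty]
    simp only [Finset.sum_empty]
    exact Finset.sum_nonneg fun i _ => mul_nonneg (hs0 i) (hq0 i)

lemma eckart_young {n : ℕ} (Y : Matrix (Fin n) (Fin n) ℝ) (s : Fin n → ℝ)
    (hs0 : ∀ i, 0 ≤ s i) (hmono : ∀ i j : Fin n, i ≤ j → s j ≤ s i) :
    ∑ i ∈ Finset.univ.filter (fun i : Fin n => Y.rank ≤ i.val), s i ^ 2
      ≤ frobSq (Y - Matrix.diagonal s) := by
  classical
  set e : (EuclideanSpace ℝ (Fin n)) ≃ₗ[ℝ] (Fin n → ℝ) := WithLp.linearEquiv 2 ℝ (Fin n → ℝ) with he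
  set W' : Submodule ℝ (Fin n → ℝ) := Submodule.span ℝ (Set.range Yᵀ) with hW'
  set W : Submodule ℝ (EuclideanSpace ℝ (Fin n)) := W'.comap e.toLinearMap with hW
  have hWrank : Module.finrank ℝ W = Y.rank := by
    rw [Y.rank_eq_finrank_span_cols]
    exact LinearEquiv.finrank_eq (LinearEquiv.ofSubmodule' e W')
  set k := Module.finrank ℝ (Wᗮ : Submodule ℝ (EuclideanSpace ℝ (Fin n))) with hkdef
  have hk : Module.finrank ℝ W + k = n := by
    rw [hkdef]
    rw [Submodule.finrank_add_finrank_orthogonal]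
    exact finrank_euclideanSpace_fin
  have hrle : Module.finrank ℝ W ≤ n := le_of_add_le_left hk.le
  set b : OrthonormalBasis (Fin k) ℝ (Wᗮ : Submodule ℝ (EuclideanSpace ℝ (Fin n))) := stdOrthonormalBasis ℝ _ with hb
  set w : Fin k → (EuclideanSpace ℝ (Fin n)) := fun l => ((Wᗮ : Submodule ℝ (EuclideanSpace ℝ (Fin n))).subtypeₗᵢ) (b l) with hwdef
  have hw : Orthonormal ℝ w := b.orthonormal.comp_linearIsometry _
  set col : Fin n → (EuclideanSpace ℝ (Fin n)) := fun j => e.symm (Yᵀ j) with hcoldef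
  have hcol : ∀ j, col j ∈ W := by
    intro j
    rw [hW, Submodule.mem_comap]
    have : e.toLinearMap (e.symm (Yᵀ j)) = Yᵀ j := e.apply_symm_apply _
    rw [hcoldef]; simp only [this]
    exact Submodule.subset_span ⟨j, rfl⟩
  have hinner_w_col : ∀ l j, (inner ℝ (w l) (col j) : ℝ) = 0 := by
    intro l j
    rw [real_inner_comm]
    exact (Submodule.mem_orthogonal _ _).mp (b l).2 _ (hcol j)
  set δ : Fin n → (EuclideanSpace ℝ (Fin n)) := fun j => EuclideanSpace.single j (1 : ℝ) with hδ
  set q : Fin n → ℝ := fun j => ∑ l, (inner ℝ (w l) (δ j) : ℝ) ^ 2 with hq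
  -- apply function lemmas
  have happly : ∀ (x : (EuclideanSpace ℝ (Fin n))) (i : Fin n), True := fun _ _ => trivial
  have hq0 : ∀ j, 0 ≤ q j := fun j => Finset.sum_nonneg fun _ _ => sq_nonneg _
  have hq1 : ∀ j, q j ≤ 1 := by
    intro j
    have := hw.sum_inner_products_le (s := Finset.univ) (δ j)
    simp only [Real.norm_eq_abs, sq_abs] at this
    have hn : ‖δ j‖ = 1 := by
      rw [hδ]
      exact (EuclideanSpace.norm_single j 1).trans norm_one
    calc q j ≤ ‖δ j‖ ^ 2 := this
      _ = 1 := by rw [hn, one_pow]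
  have hnormsq : ∀ x : (EuclideanSpace ℝ (Fin n)), ‖x‖ ^ 2 = ∑ i, (x i) ^ 2 := by
    intro x
    rw [← real_inner_self_eq_norm_sq, PiLp.inner_apply]
    simp [sq]
  have hinner_single : ∀ (x : (EuclideanSpace ℝ (Fin n))) (j : Fin n), (inner ℝ x (δ j) : ℝ) = x j := by
    intro x j
    rw [hδ]
    simp only [EuclideanSpace.inner_single_right]
    simp
  have hqsum : ∑ j, q j = (n : ℝ) - Module.finrank ℝ W := by
    rw [hq]
    rw [Finset.sum_comm]
    have : ∀ l, ∑ j, (inner ℝ (w l) (δ j) : ℝ) ^ 2 = 1 := by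
      intro l
      simp_rw [hinner_single]
      rw [← hnormsq, hw.1 l, one_pow]
    simp_rw [this]
    rw [Finset.sum_const, Finset.card_univ, Fintype.card_fin, nsmul_eq_mul, mul_one]
    have : (n : ℝ) = Module.finrank ℝ W + k := by exact_mod_cast hk.symm
    rw [this]; ring
  -- column bound
  have hcolbound : ∀ j, s j ^ 2 * q j ≤ ∑ i, ((Y - Matrix.diagonal s) i j) ^ 2 := by
    intro j
    set c : (EuclideanSpace ℝ (Fin n)) := col j - s j • δ j with hc
    have hcapply : ∀ i, c i = (Y - Matrix.diagonal s) i j := by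
      intro i
      rw [hc]
      have h1 : (col j - s j • δ j) i = col j i - s j * δ j i := rfl
      have h2 : col j i = Y i j := rfl
      have h3 : δ j i = if i = j then 1 else 0 := EuclideanSpace.single_apply j 1 i
      rw [h1, h2, h3, Matrix.sub_apply, Matrix.diagonal_apply]
      split_ifs with h
      · subst h; ring
      · ring
    have hbess := hw.sum_inner_products_le (s := Finset.univ) c
    simp only [Real.norm_eq_abs, sq_abs] at hbess
    have hic : ∀ l, (inner ℝ (w l) c : ℝ) = - (s j * (inner ℝ (w l) (δ j) : ℝ)) := by
      intro l
      rw [hc, inner_sub_right, hinner_w_col, real_inner_smul_right]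
      ring
    calc s j ^ 2 * q j = ∑ l, (inner ℝ (w l) c : ℝ) ^ 2 := by
          rw [hq, Finset.mul_sum]
          congr 1; funext l
          rw [hic]; ring
      _ ≤ ‖c‖ ^ 2 := hbess
      _ = ∑ i, ((Y - Matrix.diagonal s) i j) ^ 2 := by
          rw [hnormsq]
          congr 1; funext i
          rw [hcapply]
  -- assemble
  have hfrob : frobSq (Y - Matrix.diagonal s) = ∑ j, ∑ i, ((Y - Matrix.diagonal s) i j) ^ 2 := by
    rw [frobSq, Finset.sum_comm]
  have step1 : ∑ j, s j ^ 2 * q j ≤ frobSq (Y - Matrix.diagonal s) := by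
    rw [hfrob]
    exact Finset.sum_le_sum fun j _ => hcolbound j
  have step2 := weighted_tail_bound hrle (fun i => s i ^ 2) q
    (fun i => sq_nonneg _)
    (fun i j hij => by
      show s j ^ 2 ≤ s i ^ 2
      nlinarith [hmono i j hij, hs0 j, hs0 i])
    hq0 hq1 hqsum
  rw [← hWrank]
  exact le_trans step2 step1

lemma frobSq_diagonal {n : ℕ} (f : Fin n → ℝ) :
    frobSq (Matrix.diagonal f) = ∑ i, f i ^ 2 := by
  unfold frobSq
  apply Finset.sum_congr rfl
  intro i _
  rw [Finset.sum_eq_single i]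
  · rw [Matrix.diagonal_apply_eq]
  · intro j _ hj
    rw [Matrix.diagonal_apply_ne' _ hj]
    ring
  · intro h; exact absurd (Finset.mem_univ i) h

lemma rank_sandwich {m n : ℕ} (U : Matrix (Fin m) (Fin n) ℝ) (V : Matrix (Fin n) (Fin n) ℝ)
    (hU : Uᵀ * U = 1) (hV : Vᵀ * V = 1) (D : Matrix (Fin n) (Fin n) ℝ) :
    (U * D * Vᵀ).rank = D.rank := by
  apply le_antisymm
  · exact le_trans (Matrix.rank_mul_le_left (U * D) Vᵀ) (Matrix.rank_mul_le_right U D)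
  · have hVVt : V * Vᵀ = 1 := mul_eq_one_comm.mp hV
    have hD : D = Uᵀ * (U * D * Vᵀ) * V := by
      rw [show Uᵀ * (U * D * Vᵀ) * V = ((Uᵀ * U) * D) * (Vᵀ * V) by
        simp only [← Matrix.mul_assoc], hU, hV, Matrix.one_mul, Matrix.mul_one]
    conv_lhs => rw [hD]
    exact le_trans (Matrix.rank_mul_le_left _ V) (Matrix.rank_mul_le_right Uᵀ _)

/-- Let `Z = U diag(σ) Vᵀ` be an SVD of the m×n matrix `Z`. For `λ ≥ 0`,
the hard-thresholded matrix `S_{λ,ℓ₀}(Z) = U diag(σᵢ·1(σᵢ > √(2λ))) Vᵀ` minimizes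
`½‖X − Z‖_F² + λ·rank(X)` over all m×n matrices `X`. -/
theorem hard_thresholding_minimizes_rank_objective
    {m n : ℕ} (lam : ℝ) (hlam : 0 ≤ lam)
    (Z : Matrix (Fin m) (Fin n) ℝ)
    (U : Matrix (Fin m) (Fin n) ℝ) (V : Matrix (Fin n) (Fin n) ℝ) (σ : Fin n → ℝ)
    (hU : Uᵀ * U = 1) (hV : Vᵀ * V = 1)
    (hσ : ∀ i, 0 ≤ σ i) (hσord : ∀ i j : Fin n, i ≤ j → σ j ≤ σ i)
    (hZ : Z = U * Matrix.diagonal σ * Vᵀ) :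
    ∀ X : Matrix (Fin m) (Fin n) ℝ,
      (1 / 2) * frobSq
          (U * Matrix.diagonal (fun i => if Real.sqrt (2 * lam) < σ i then σ i else 0) * Vᵀ - Z) +
        lam * ((U * Matrix.diagonal (fun i => if Real.sqrt (2 * lam) < σ i then σ i else 0)
            * Vᵀ).rank : ℝ) ≤
      (1 / 2) * frobSq (X - Z) + lam * (X.rank : ℝ) := by
  classical
  intro X
  set d : Fin n → ℝ := fun i => if Real.sqrt (2 * lam) < σ i then σ i else 0 with hd
  -- LHS value
  have hSZ : U * Matrix.diagonal d * Vᵀ - Z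
      = U * (Matrix.diagonal d - Matrix.diagonal σ) * Vᵀ := by
    rw [hZ, Matrix.mul_sub, Matrix.sub_mul]
  have hfrobS : frobSq (U * Matrix.diagonal d * Vᵀ - Z) = ∑ i, (d i - σ i) ^ 2 := by
    rw [hSZ, frobSq_mul_right _ V hV, frobSq_mul_left U hU, Matrix.diagonal_sub,
      frobSq_diagonal]
  have hrankS : ((U * Matrix.diagonal d * Vᵀ).rank : ℝ)
      = ∑ i, (if d i ≠ 0 then (1 : ℝ) else 0) := by
    rw [rank_sandwich U V hU hV, Matrix.rank_diagonal, Fintype.card_subtype, Finset.sum_boole]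
  have hlhs : (1 / 2) * frobSq (U * Matrix.diagonal d * Vᵀ - Z)
      + lam * ((U * Matrix.diagonal d * Vᵀ).rank : ℝ)
      = ∑ i, min (σ i ^ 2 / 2) lam := by
    rw [hfrobS, hrankS, Finset.mul_sum, Finset.mul_sum, ← Finset.sum_add_distrib]
    apply Finset.sum_congr rfl
    intro i _
    have hsnn := Real.sqrt_nonneg (2 * lam)
    have hsq : Real.sqrt (2 * lam) ^ 2 = 2 * lam := Real.sq_sqrt (by linarith)
    by_cases hcase : Real.sqrt (2 * lam) < σ i
    · have hdi : d i = σ i := if_pos hcase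
      have hne : σ i ≠ 0 := by intro h; rw [h] at hcase; linarith
      have hlamle : lam ≤ σ i ^ 2 / 2 := by nlinarith
      rw [hdi, if_pos hne, min_eq_right hlamle]
      ring
    · have hdi : d i = 0 := if_neg hcase
      have hle : σ i ≤ Real.sqrt (2 * lam) := not_lt.mp hcase
      have hlamge : σ i ^ 2 / 2 ≤ lam := by nlinarith [hσ i]
      rw [hdi, if_neg (by simp), min_eq_left hlamge]
      ring
  rw [hlhs]
  -- RHS lower bound
  set Y : Matrix (Fin n) (Fin n) ℝ := Uᵀ * X * V with hY
  have hUZV : Uᵀ * Z * V = Matrix.diagonal σ := by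
    rw [hZ, ← Matrix.mul_assoc Uᵀ (U * Matrix.diagonal σ) Vᵀ,
      ← Matrix.mul_assoc Uᵀ U (Matrix.diagonal σ), hU, Matrix.one_mul,
      Matrix.mul_assoc (Matrix.diagonal σ) Vᵀ V, hV, Matrix.mul_one]
  have hYZ : Uᵀ * ((X - Z) * V) = Y - Matrix.diagonal σ := by
    rw [hY, ← hUZV, Matrix.sub_mul, Matrix.mul_sub, Matrix.mul_assoc, Matrix.mul_assoc]
  have hfrobX : frobSq (Y - Matrix.diagonal σ) ≤ frobSq (X - Z) := by
    rw [← hYZ]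
    calc frobSq (Uᵀ * ((X - Z) * V)) ≤ frobSq ((X - Z) * V) := frobSq_bessel U hU _
      _ = frobSq (X - Z) := frobSq_mul_right' _ V hV
  have hYr : Y.rank ≤ X.rank :=
    le_trans (Matrix.rank_mul_le_left (Uᵀ * X) V) (Matrix.rank_mul_le_right Uᵀ X)
  have hEY := eckart_young Y σ hσ hσord
  have htail : ∑ i ∈ Finset.univ.filter (fun i : Fin n => X.rank ≤ i.val), σ i ^ 2
      ≤ frobSq (X - Z) := by
    refine le_trans (le_trans ?_ hEY) hfrobX
    apply Finset.sum_le_sum_of_subset_of_nonneg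
    · intro i hi
      simp only [Finset.mem_filter, Finset.mem_univ, true_and] at hi ⊢
      exact le_trans hYr hi
    · intro i _ _; exact sq_nonneg _
  -- combine
  have hmin : ∑ i, min (σ i ^ 2 / 2) lam
      ≤ (1 / 2) * (∑ i ∈ Finset.univ.filter (fun i : Fin n => X.rank ≤ i.val), σ i ^ 2)
        + lam * (X.rank : ℝ) := by
    have h1 : ∑ i, min (σ i ^ 2 / 2) lam
        ≤ ∑ i : Fin n, (if X.rank ≤ i.val then σ i ^ 2 / 2 else lam) := by
      apply Finset.sum_le_sum
      intro i _
      split_ifs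
      · exact min_le_left _ _
      · exact min_le_right _ _
    have h2 : ∑ i : Fin n, (if X.rank ≤ i.val then σ i ^ 2 / 2 else lam)
        = ∑ i ∈ Finset.univ.filter (fun i : Fin n => X.rank ≤ i.val), σ i ^ 2 / 2
          + ∑ i ∈ Finset.univ.filter (fun i : Fin n => ¬ X.rank ≤ i.val), lam := by
      rw [Finset.sum_ite]
    have h3 : ∑ i ∈ Finset.univ.filter (fun i : Fin n => ¬ X.rank ≤ i.val), lam
        ≤ lam * (X.rank : ℝ) := by
      rw [Finset.sum_const, nsmul_eq_mul]
      have hcard : (Finset.univ.filter fun i : Fin n => ¬ X.rank ≤ i.val).card ≤ X.rank := by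
        have : (Finset.univ.filter fun i : Fin n => ¬ X.rank ≤ i.val)
            = (Finset.univ.filter fun i : Fin n => i.val < X.rank) := by
          apply Finset.filter_congr
          intro i _
          simp [not_le]
        rw [this]
        exact card_filter_lt_le
      calc ((Finset.univ.filter fun i : Fin n => ¬ X.rank ≤ i.val).card : ℝ) * lam
          ≤ (X.rank : ℝ) * lam := by
            apply mul_le_mul_of_nonneg_right _ hlam
            exact_mod_cast hcard
        _ = lam * (X.rank : ℝ) := mul_comm _ _
    have h4 : ∑ i ∈ Finset.univ.filter (fun i : Fin n => X.rank ≤ i.val), σ i ^ 2 / 2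
        = (1 / 2) * ∑ i ∈ Finset.univ.filter (fun i : Fin n => X.rank ≤ i.val), σ i ^ 2 := by
      rw [Finset.mul_sum]
      apply Finset.sum_congr rfl
      intro i _; ring
    rw [h2, h4] at h1
    linarith
  have := htail
  linarith
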